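/- Let Θ be the free module over ℂ[[s]] with basis e₁, e₂ (modeling (Log s) and (Log s)² in Ξ₁²/Ξ₁⁰). Define ℂ-linear operators a, b on Θ by a(s^m e_k) = s^{m+1} e_k for k = 1,2, b(s^m e₁) = s^{m+1}/(m+1) · e₁, and b(s^m e₂) = s^{m+1}/(m+1) · e₂ − 2 s^{m+1}/(m+1)² · e₁, extended continuously/ℂ-linearly to formal power series coefficients. Then a∘b − b∘a = b∘b as operators on Θ. -/

import Mathlib

open PowerSeries

/-- `Θ = ℂ[[s]]e₁ ⊕ ℂ[[s]]e₂`: first component is the `e₁`-coefficient,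
second component the `e₂`-coefficient. -/
abbrev Theta : Type := PowerSeries ℂ × PowerSeries ℂ

/-- `s^m ↦ s^{m+1}/(m+1)`, extended to power series coefficients. -/
noncomputable def shiftDiv : PowerSeries ℂ →ₗ[ℂ] PowerSeries ℂ where
  toFun φ := PowerSeries.mk fun n => if n = 0 then 0 else (PowerSeries.coeff (R := ℂ) (n - 1)) φ / n
  map_add' φ ψ := by
    ext n
    simp only [PowerSeries.coeff_mk, map_add]
    split_ifs <;> simp [add_div]
  map_smul' c φ := by
    ext n
    simp only [PowerSeries.coeff_mk, PowerSeries.coeff_smul, RingHom.id_apply, smul_eq_mul]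
    split_ifs <;> simp [mul_div_assoc]

/-- `s^m ↦ s^{m+1}/(m+1)²`, extended to power series coefficients. -/
noncomputable def shiftDiv2 : PowerSeries ℂ →ₗ[ℂ] PowerSeries ℂ where
  toFun φ := PowerSeries.mk fun n => if n = 0 then 0 else (PowerSeries.coeff (R := ℂ) (n - 1)) φ / (n : ℂ) ^ 2
  map_add' φ ψ := by
    ext n
    simp only [PowerSeries.coeff_mk, map_add]
    split_ifs <;> simp [add_div]
  map_smul' c φ := by
    ext n
    simp only [PowerSeries.coeff_mk, PowerSeries.coeff_smul, RingHom.id_apply, smul_eq_mul]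
    split_ifs <;> simp [mul_div_assoc]

/-- The operator `a`: multiplication by `s` on both components. -/
noncomputable def opa : Theta →ₗ[ℂ] Theta :=
  (LinearMap.mulLeft ℂ (PowerSeries.X : PowerSeries ℂ)).prodMap
    (LinearMap.mulLeft ℂ (PowerSeries.X : PowerSeries ℂ))

/-- The operator `b`: `b(s^m e₁) = s^{m+1}/(m+1) e₁`,
`b(s^m e₂) = s^{m+1}/(m+1) e₂ − 2 s^{m+1}/(m+1)² e₁`. -/
noncomputable def opb : Theta →ₗ[ℂ] Theta :=
  LinearMap.prod
    (shiftDiv ∘ₗ LinearMap.fst ℂ (PowerSeries ℂ) (PowerSeries ℂ)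
      - (2 : ℂ) • (shiftDiv2 ∘ₗ LinearMap.snd ℂ (PowerSeries ℂ) (PowerSeries ℂ)))
    (shiftDiv ∘ₗ LinearMap.snd ℂ (PowerSeries ℂ) (PowerSeries ℂ))

lemma shiftDiv_coeff (φ : PowerSeries ℂ) (n : ℕ) :
    coeff (R := ℂ) n (shiftDiv φ) = if n = 0 then 0 else coeff (R := ℂ) (n-1) φ / n := by
  simp [shiftDiv]

lemma shiftDiv2_coeff (φ : PowerSeries ℂ) (n : ℕ) :
    coeff (R := ℂ) n (shiftDiv2 φ) = if n = 0 then 0 else coeff (R := ℂ) (n-1) φ / (n : ℂ)^2 := by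
  simp [shiftDiv2]

lemma shiftDiv_X_pow (m : ℕ) :
    shiftDiv ((X : PowerSeries ℂ) ^ m) = ((m+1 : ℂ))⁻¹ • (X : PowerSeries ℂ) ^ (m+1) := by
  ext n
  rw [shiftDiv_coeff]
  rcases n with _ | n
  · simp [coeff_X_pow]
  · simp only [Nat.succ_ne_zero, if_false, Nat.add_sub_cancel, coeff_X_pow, map_smul,
      smul_eq_mul]
    by_cases h : n = m
    · subst h; simp [div_eq_inv_mul]
    · simp [h]

lemma shiftDiv2_X_pow (m : ℕ) :
    shiftDiv2 ((X : PowerSeries ℂ) ^ m) = (((m+1 : ℂ))^2)⁻¹ • (X : PowerSeries ℂ) ^ (m+1) := by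
  ext n
  rw [shiftDiv2_coeff]
  rcases n with _ | n
  · simp [coeff_X_pow]
  · simp only [Nat.succ_ne_zero, if_false, Nat.add_sub_cancel, coeff_X_pow, map_smul,
      smul_eq_mul]
    by_cases h : n = m
    · subst h; push_cast; simp [div_eq_inv_mul]
    · simp [h]

/-- The operators `a`, `b` act on the monomial basis by the prescribed formulas, and
`a∘b − b∘a = b∘b` as operators on `Θ`. -/
theorem stmt0 :
    (∀ m : ℕ,
      opa ((PowerSeries.X : PowerSeries ℂ) ^ m, 0) = ((PowerSeries.X : PowerSeries ℂ) ^ (m + 1), 0) ∧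
      opa (0, (PowerSeries.X : PowerSeries ℂ) ^ m) = (0, (PowerSeries.X : PowerSeries ℂ) ^ (m + 1)) ∧
      opb ((PowerSeries.X : PowerSeries ℂ) ^ m, 0)
        = (((m + 1 : ℂ))⁻¹ • (PowerSeries.X : PowerSeries ℂ) ^ (m + 1), 0) ∧
      opb (0, (PowerSeries.X : PowerSeries ℂ) ^ m)
        = (-(2 / ((m + 1 : ℂ)) ^ 2) • (PowerSeries.X : PowerSeries ℂ) ^ (m + 1),
           ((m + 1 : ℂ))⁻¹ • (PowerSeries.X : PowerSeries ℂ) ^ (m + 1)))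
    ∧ opa ∘ₗ opb - opb ∘ₗ opa = opb ∘ₗ opb := by
  constructor
  · intro m
    refine ⟨?_, ?_, ?_, ?_⟩
    · simp [opa, pow_succ, mul_comm]
    · simp [opa, pow_succ, mul_comm]
    · simp [opb, shiftDiv_X_pow, shiftDiv2_X_pow]
    · simp only [opb, LinearMap.prod_apply, LinearMap.coe_comp, Function.comp_apply,
        LinearMap.sub_apply, LinearMap.smul_apply, LinearMap.fst_apply, LinearMap.snd_apply,
        Function.prod, map_zero, shiftDiv_X_pow, shiftDiv2_X_pow]
      refine Prod.ext ?_ rfl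
      rw [zero_sub, smul_smul]
      congr 1
      simp [div_eq_mul_inv]
  · apply LinearMap.ext
    rintro ⟨φ, ψ⟩
    have key : ∀ χ : PowerSeries ℂ, ∀ n : ℕ,
        coeff (R := ℂ) n (X * χ) = if n = 0 then 0 else coeff (R := ℂ) (n-1) χ := by
      intro χ n
      rcases n with _ | n
      · simp
      · simp [PowerSeries.coeff_succ_X_mul]
    apply Prod.ext <;> ext n <;>
      simp only [opa, opb, LinearMap.comp_apply, LinearMap.prod_apply, Function.prod,
        LinearMap.prodMap_apply, Prod.map_fst, Prod.map_snd, LinearMap.sub_apply,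
        LinearMap.smul_apply, LinearMap.coe_comp, Function.comp_apply, LinearMap.fst_apply,
        LinearMap.snd_apply, LinearMap.mulLeft_apply, Prod.fst_sub, Prod.snd_sub,
        map_sub, map_smul, Prod.smul_fst, Prod.smul_snd] <;>
      simp only [map_sub, map_smul, PowerSeries.coeff_smul, smul_eq_mul, key,
        shiftDiv_coeff, shiftDiv2_coeff] <;>
      rcases n with _ | _ | n <;>
      simp only [Nat.succ_ne_zero, if_false, if_true, reduceIte, Nat.add_sub_cancel,
        Nat.cast_add, Nat.cast_ofNat, Nat.cast_one, Nat.cast_zero]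
    all_goals try norm_num
    all_goals
      have h1 : ((n:ℂ)+1) ≠ 0 := Nat.cast_add_one_ne_zero n
      have h2 : ((n:ℂ)+1+1) ≠ 0 := by
        have : ((n:ℕ):ℂ)+1+1 = (((n+1+1:ℕ)):ℂ) := by push_cast; ring
        rw [this]
        exact_mod_cast Nat.succ_ne_zero (n+1)
      have e1 : ∀ x:ℂ, x/((n:ℂ)+1) - x/((n:ℂ)+1+1) = x/((n:ℂ)+1)/((n:ℂ)+1+1) := by
        intro x; field_simp; ring
      have e2 : ∀ x:ℂ, x/((n:ℂ)+1)^2 - x/((n:ℂ)+1+1)^2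
          = x/((n:ℂ)+1)^2/((n:ℂ)+1+1) + x/((n:ℂ)+1)/((n:ℂ)+1+1)^2 := by
        intro x; field_simp; ring
      first
      | linear_combination e1 ((PowerSeries.coeff (R := ℂ) n) φ) - 2 * e2 ((PowerSeries.coeff (R := ℂ) n) ψ)
      | linear_combination e1 ((PowerSeries.coeff (R := ℂ) n) ψ)
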